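/- arXiv:2501.01512 — 11 statements merged into one kernel-verified Lean document; each statement's English description precedes it below -/
import Mathlib

section
/- Suppose Y is a join semilattice and the Lagrangian L : X × Y → P (with P a totally ordered set containing a distinguished element 0) is monotone in its second argument. Consider sequences (αₙ), (βₙ), (γₙ) produced by the primal-dual procedure: L(αₙ₊₁, βₙ) < 0, L(αₙ₊₁, γₙ₊₁) > 0, and βₙ₊₁ = βₙ ⊔ γₙ₊₁. Then αᵢ ≠ αⱼ for all i < j, and βᵢ ≠ βⱼ for all i ≠ j (in fact βᵢ < βᵢ₊₁ strictly). -/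
/-- Progress of the primal-dual procedure: if Y is a join semilattice, L is monotone in
its second argument, and the procedure produces sequences with L(αₙ₊₁,βₙ) < 0,
L(αₙ₊₁,γₙ₊₁) > 0 and βₙ₊₁ = βₙ ⊔ γₙ₊₁, then the α's (from index 1 on) are pairwise
distinct and the β's are strictly increasing, hence pairwise distinct. -/
theorem primal_dual_progress {X Y P : Type*} [SemilatticeSup Y] [LinearOrder P]
    (z : P) (L : X → Y → P)
    (hmono : ∀ (x : X) (y y' : Y), y ≤ y' → L x y ≤ L x y')
    (α : ℕ → X) (β γ : ℕ → Y)
    (hα : ∀ n, L (α (n + 1)) (β n) < z)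
    (hγ : ∀ n, z < L (α (n + 1)) (γ (n + 1)))
    (hβ : ∀ n, β (n + 1) = β n ⊔ γ (n + 1)) :
    (∀ i j, i < j → α (i + 1) ≠ α (j + 1)) ∧
    (∀ n, β n < β (n + 1)) ∧
    (∀ i j, i ≠ j → β i ≠ β j) := by
  have hle : ∀ n, β n ≤ β (n + 1) := fun n => (hβ n) ▸ le_sup_left
  have hmonoβ : Monotone β := monotone_nat_of_le_succ hle
  have hγle : ∀ n, γ (n + 1) ≤ β (n + 1) := fun n => (hβ n) ▸ le_sup_right
  have hstrict : ∀ n, β n < β (n + 1) := by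
    intro n
    refine lt_of_le_of_ne (hle n) fun h => ?_
    have h1 := hα n
    have h2 := lt_of_lt_of_le (hγ n) (hmono _ _ _ (hγle n))
    rw [← h] at h2
    exact absurd h1 (not_lt_of_gt h2)
  refine ⟨fun i j hij heq => ?_, hstrict, fun i j hij => ?_⟩
  · have h1 : z < L (α (i + 1)) (β j) :=
      lt_of_lt_of_le (hγ i) (hmono _ _ _ ((hγle i).trans (hmonoβ (Nat.succ_le_of_lt hij))))
    rw [heq] at h1
    exact absurd (hα j) (not_lt_of_gt h1)
  · have hsm : StrictMono β := strictMono_nat_of_lt_succ hstrict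
    exact hsm.injective.ne hij
end

section
/- Let L : X × Y → {-1,1} be a Lagrangian where X is a join semilattice with L anti-monotone on X, and Y = ⨄_{n∈ℕ} Yₙ is a stratification with each Yₙ finite. Assume there exists a positive witness β* ∈ Y with inf_x L(x,β*) = 1. If the primal-dual procedure always accumulates α (αₙ₊₁ = αₙ ⊔ δ) and always chooses γ from the smallest possible layer (γ ∈ Y_l with l minimal such that some γ ∈ Y_l satisfies L(α,γ) = 1), then the procedure terminates. -/
/-- Termination via stratification: X a join semilattice, L anti-monotone on X with
values in {-1,1}, Y stratified into finite layers, and a positive witness β* with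
inf_x L(x,β*) = 1. If the procedure accumulates α and chooses γ from the smallest
possible layer, it terminates: there is no infinite run. -/
theorem stratified_termination {X Y : Type*} [SemilatticeSup X]
    (L : X → Y → ℤ) (hval : ∀ x y, L x y = -1 ∨ L x y = 1)
    (hanti : ∀ (x x' : X) (y : Y), x ≤ x' → L x' y ≤ L x y)
    (layer : Y → ℕ) (hfin : ∀ n, {y : Y | layer y = n}.Finite)
    (βstar : Y) (hwit : ∀ x, L x βstar = 1)
    (α δ : ℕ → X) (β γ : ℕ → Y)
    (hδ : ∀ n, L (δ n) (β n) = -1)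
    (hα : ∀ n, α (n + 1) = α n ⊔ δ n)
    (hγ : ∀ n, L (α (n + 1)) (γ n) = 1)
    (hmin : ∀ n (y : Y), L (α (n + 1)) y = 1 → layer (γ n) ≤ layer y)
    (hβ : ∀ n, β (n + 1) = γ n) :
    False := by
  have hmono : Monotone α := monotone_nat_of_le_succ (fun n => by rw [hα]; exact le_sup_left)
  have hδle : ∀ n m, n + 1 ≤ m → δ n ≤ α m := fun n m h =>
    le_trans (by rw [hα]; exact le_sup_right) (hmono h)
  have hLβ1 : ∀ n, L (α (n + 1)) (β (n + 1)) = 1 := fun n => by rw [hβ]; exact hγ n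
  have hneg : ∀ n m, n + 1 ≤ m → L (α m) (β n) = -1 := by
    intro n m h
    have h2 := hanti (δ n) (α m) (β n) (hδle n m h)
    rcases hval (α m) (β n) with h1 | h1
    · exact h1
    · rw [h1, hδ n] at h2; omega
  have hinj : Function.Injective (fun n => β (n + 1)) := by
    intro n m hnm
    simp only at hnm
    rcases lt_trichotomy n m with hlt | heq | hlt
    · have h1 := hLβ1 m
      have h2 := hneg (n + 1) (m + 1) (by omega)
      rw [hnm] at h2
      rw [h2] at h1
      omega
    · exact heq
    · have h1 := hLβ1 n
      have h2 := hneg (m + 1) (n + 1) (by omega)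
      rw [← hnm] at h2
      rw [h2] at h1
      omega
  set N := layer βstar with hN
  have hmem : ∀ n, β (n + 1) ∈ {y : Y | layer y ≤ N} := by
    intro n
    rw [hβ]
    exact hmin n βstar (hwit _)
  have hfinS : ({y : Y | layer y ≤ N}).Finite := by
    have : {y : Y | layer y ≤ N} = ⋃ l ∈ Finset.range (N + 1), {y : Y | layer y = l} := by
      ext y
      simp only [Set.mem_setOf_eq, Set.mem_iUnion, Finset.mem_range]
      constructor
      · intro h; exact ⟨layer y, by omega, rfl⟩
      · rintro ⟨l, hl, rfl⟩; omega
    rw [this]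
    exact Set.Finite.biUnion (Finset.range (N + 1)).finite_toSet (fun l _ => hfin l)
  exact (Set.infinite_of_injective_forall_mem hinj hmem) hfinS
end

section
/- Let L : X × Y → {-1,1} be a Lagrangian with Y a join semilattice and L monotone on Y. Let r : Y → ℕ be a join semilattice homomorphism (r(y ⊔ y') = max(r(y), r(y'))), and suppose each level Yₙ = {y : r(y) = n} has no infinite strictly increasing chain. If the primal-dual procedure always sets β ← β ⊔ γ with γ chosen from the smallest possible layer, and there exists a positive witness β* with inf_x L(x,β*) = 1, then the procedure terminates. -/
/-- Termination with stratification and monotonicity on the same side: Y a join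
semilattice, L monotone on Y, r : Y → ℕ a join homomorphism whose layers have no
infinite strictly increasing chains, and a positive witness β*. If β accumulates
(β ← β ⊔ γ) and γ is chosen from the smallest possible layer, the procedure
terminates: there is no infinite run. -/
theorem stratified_lattice_termination {X Y : Type*} [SemilatticeSup Y]
    (L : X → Y → ℤ) (hval : ∀ x y, L x y = -1 ∨ L x y = 1)
    (hmono : ∀ (x : X) (y y' : Y), y ≤ y' → L x y ≤ L x y')
    (r : Y → ℕ) (hr : ∀ y y', r (y ⊔ y') = max (r y) (r y'))
    (hheight : ∀ n, ¬ ∃ f : ℕ → Y, StrictMono f ∧ ∀ k, r (f k) = n)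
    (βstar : Y) (hwit : ∀ x, L x βstar = 1)
    (α : ℕ → X) (β γ : ℕ → Y)
    (hα : ∀ n, L (α n) (β n) = -1)
    (hγ : ∀ n, L (α n) (γ n) = 1)
    (hmin : ∀ n (y : Y), L (α n) y = 1 → r (γ n) ≤ r y)
    (hβ : ∀ n, β (n + 1) = β n ⊔ γ n) :
    False := by
  -- β is strictly increasing
  have hstrict : StrictMono β := by
    apply strictMono_nat_of_lt_succ
    intro n
    rw [hβ n]
    refine lt_of_le_of_ne le_sup_left ?_
    intro heq
    have hle : γ n ≤ β n := by
      have := le_sup_right (a := β n) (b := γ n)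
      rwa [← heq] at this
    have := hmono (α n) (γ n) (β n) hle
    rw [hγ n, hα n] at this
    omega
  -- r ∘ β is monotone and bounded
  have hrb : ∀ n, r (β (n + 1)) = max (r (β n)) (r (γ n)) := by
    intro n; rw [hβ n, hr]
  have hmonor : Monotone (fun n => r (β n)) := by
    apply monotone_nat_of_le_succ
    intro n; rw [hrb n]; exact le_max_left _ _
  have hbound : ∀ n, r (β n) ≤ max (r (β 0)) (r βstar) := by
    intro n
    induction n with
    | zero => exact le_max_left _ _
    | succ k ih =>
      rw [hrb k]
      have hγb : r (γ k) ≤ r βstar := hmin k βstar (hwit (α k))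
      omega
  -- the supremum of the range of r ∘ β is attained
  set S : Set ℕ := Set.range (fun n => r (β n)) with hS
  have hne : S.Nonempty := ⟨r (β 0), ⟨0, rfl⟩⟩
  have hbdd : BddAbove S := by
    refine ⟨max (r (β 0)) (r βstar), ?_⟩
    rintro k ⟨n, rfl⟩
    exact hbound n
  obtain ⟨N, hN⟩ := Nat.sSup_mem hne hbdd
  have hle : ∀ n, r (β n) ≤ r (β N) := by
    intro n
    have : r (β N) = sSup S := hN
    rw [this]
    exact le_csSup hbdd ⟨n, rfl⟩
  -- build an infinite strictly increasing chain inside layer r (β N)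
  refine hheight (r (β N)) ⟨fun k => β (N + k), ?_, ?_⟩
  · intro a b hab
    exact hstrict (by omega)
  · intro k
    exact le_antisymm (hle _) (hmonor (Nat.le_add_right N k))
end

section
/- Let T be a transition system. The 'idealized' CEGAR Lagrangian L' over X = finite sequences of states and Y = finite sets of predicates taken from the full powerset of states enjoys strong duality, and its optimal value is 1 if and only if T is safe. In particular: if T is unsafe, a concrete error trace s₀→…→sₙ from an initial state to a bad state satisfies sup_y L'(s₀…sₙ, y) = -1; if T is safe, the set R of reachable states yields a singleton abstraction {R} with inf_x L'(x, {R}) = 1. -/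
open scoped Classical

/-- A transition system. -/
structure TS (S : Type) where
  init : Set S
  tr : S → S → Prop
  bad : Set S

def Reachable {S : Type} (T : TS S) (s : S) : Prop :=
  ∃ s₀ ∈ T.init, Relation.ReflTransGen T.tr s₀ s

def Safe {S : Type} (T : TS S) : Prop :=
  ∀ s, Reachable T s → s ∉ T.bad

/-- Indistinguishability by a finite set of predicates (arbitrary subsets of states). -/
def Indist {S : Type} (A : Finset (Set S)) (s s' : S) : Prop :=
  ∀ p ∈ A, (s ∈ p ↔ s' ∈ p)

/-- [s]_A is an abstract initial state: it contains an initial state. -/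
def AbsInit {S : Type} (T : TS S) (A : Finset (Set S)) (s : S) : Prop :=
  ∃ t, Indist A s t ∧ t ∈ T.init

/-- [s]_A is an abstract bad state: it contains a bad state. -/
def AbsBad {S : Type} (T : TS S) (A : Finset (Set S)) (s : S) : Prop :=
  ∃ t, Indist A s t ∧ t ∈ T.bad

/-- Abstract transition between equivalence classes. -/
def AbsTr {S : Type} (T : TS S) (A : Finset (Set S)) (s s' : S) : Prop :=
  ∃ u v, Indist A s u ∧ Indist A s' v ∧ T.tr u v

/-- The sequence s₀ … sₙ is an abstract error trace in T^A. -/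
def AbsErrTrace {S : Type} (T : TS S) (A : Finset (Set S)) (l : List S) : Prop :=
  ∃ h : l ≠ [], AbsInit T A (l.head h) ∧ AbsBad T A (l.getLast h) ∧
    List.Chain' (AbsTr T A) l

/-- The idealized CEGAR Lagrangian: -1 on abstract error traces, 1 otherwise. -/
noncomputable def Lcegar {S : Type} (T : TS S) (l : List S) (A : Finset (Set S)) : ℤ :=
  if AbsErrTrace T A l then -1 else 1

/-- A concrete error trace of T. -/
def ConcErrTrace {S : Type} (T : TS S) (l : List S) : Prop :=
  ∃ h : l ≠ [], l.head h ∈ T.init ∧ l.getLast h ∈ T.bad ∧ List.Chain' T.tr l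

/-- The set of reachable states of T. -/
def ReachSet {S : Type} (T : TS S) : Set S := {s | Reachable T s}

section Aux

variable {S : Type} (T : TS S)

lemma L_le_one (l : List S) (A : Finset (Set S)) : Lcegar T l A ≤ 1 := by
  unfold Lcegar; split <;> omega

lemma neg_one_le_L (l : List S) (A : Finset (Set S)) : (-1 : ℤ) ≤ Lcegar T l A := by
  unfold Lcegar; split <;> omega

lemma conc_abs {l : List S} (h : ConcErrTrace T l) (A : Finset (Set S)) :
    AbsErrTrace T A l := by
  obtain ⟨hne, hi, hb, hc⟩ := h
  exact ⟨hne, ⟨_, fun p _ => Iff.rfl, hi⟩, ⟨_, fun p _ => Iff.rfl, hb⟩,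
    hc.imp fun a b hab => ⟨a, b, fun p _ => Iff.rfl, fun p _ => Iff.rfl, hab⟩⟩

lemma abs_step (s s' : S) (h : AbsTr T {ReachSet T} s s') (hs : s ∈ ReachSet T) :
    s' ∈ ReachSet T := by
  obtain ⟨u, v, hsu, hsv, huv⟩ := h
  have hu : u ∈ ReachSet T := (hsu (ReachSet T) (Finset.mem_singleton_self _)).mp hs
  obtain ⟨s₀, h0, hrt⟩ := hu
  exact (hsv (ReachSet T) (Finset.mem_singleton_self _)).mpr ⟨s₀, h0, hrt.tail huv⟩

lemma chain_reach : ∀ (l : List S) (h : l ≠ []),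
    List.Chain' (AbsTr T {ReachSet T}) l →
    l.head h ∈ ReachSet T → l.getLast h ∈ ReachSet T
  | [a], _, _, ha => ha
  | a :: b :: l, _, hc, ha => by
      simp only [List.Chain', List.isChain_cons_cons] at hc
      have hb := abs_step T a b hc.1 ha
      have := chain_reach (b :: l) (by simp) hc.2 hb
      simpa [List.getLast_cons] using this

lemma safe_no_abs (hT : Safe T) (l : List S) :
    ¬ AbsErrTrace T {ReachSet T} l := by
  rintro ⟨hne, ⟨t, hit, ht⟩, ⟨u, hbu, hu⟩, hc⟩
  have hhead : l.head hne ∈ ReachSet T :=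
    (hit (ReachSet T) (Finset.mem_singleton_self _)).mpr ⟨t, ht, Relation.ReflTransGen.refl⟩
  have hlast := chain_reach T l hne hc hhead
  exact hT u ((hbu (ReachSet T) (Finset.mem_singleton_self _)).mp hlast) hu

lemma unsafe_trace (h : ¬ Safe T) : ∃ l, ConcErrTrace T l := by
  simp only [Safe, not_forall, not_not] at h
  obtain ⟨s, hr, hb⟩ := h
  obtain ⟨s₀, h0, hrt⟩ := hr
  obtain ⟨l, hc, hl⟩ := List.exists_isChain_cons_of_relationReflTransGen hrt
  refine ⟨s₀ :: l, List.cons_ne_nil _ _, h0, ?_, hc⟩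
  simpa [hl]

end Aux

/-- The idealized CEGAR Lagrangian enjoys strong duality, its optimal value is 1 iff T is
safe; a concrete error trace witnesses primal value -1, and if T is safe the singleton
abstraction by the set of reachable states witnesses dual value 1. -/
theorem cegar_idealized_strong_duality {S : Type} (T : TS S) :
    ((⨆ A : Finset (Set S), ⨅ l : List S, Lcegar T l A) =
        (⨅ l : List S, ⨆ A : Finset (Set S), Lcegar T l A)) ∧
    ((⨆ A : Finset (Set S), ⨅ l : List S, Lcegar T l A) = 1 ↔ Safe T) ∧
    (∀ l : List S, ConcErrTrace T l →
        (⨆ A : Finset (Set S), Lcegar T l A) = -1) ∧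
    (Safe T →
        (⨅ l : List S, Lcegar T l ({ReachSet T} : Finset (Set S))) = 1) := by
  have bddA : ∀ l : List S, BddAbove (Set.range fun A : Finset (Set S) => Lcegar T l A) :=
    fun l => ⟨1, by rintro x ⟨A, rfl⟩; exact L_le_one T l A⟩
  have bddB : ∀ A : Finset (Set S), BddBelow (Set.range fun l : List S => Lcegar T l A) :=
    fun A => ⟨-1, by rintro x ⟨l, rfl⟩; exact neg_one_le_L T l A⟩
  have bddSI : BddAbove (Set.range fun A : Finset (Set S) => ⨅ l : List S, Lcegar T l A) :=
    ⟨1, by rintro x ⟨A, rfl⟩; exact (ciInf_le (bddB A) []).trans (L_le_one T [] A)⟩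
  have bddIS : BddBelow (Set.range fun l : List S => ⨆ A : Finset (Set S), Lcegar T l A) :=
    ⟨-1, by rintro x ⟨l, rfl⟩; exact (neg_one_le_L T l ∅).trans (le_ciSup (bddA l) ∅)⟩
  -- dual witness when safe
  have hdual : Safe T → (⨅ l : List S, Lcegar T l ({ReachSet T} : Finset (Set S))) = 1 := by
    intro hT
    have h1 : ∀ l : List S, Lcegar T l ({ReachSet T} : Finset (Set S)) = 1 :=
      fun l => if_neg (safe_no_abs T hT l)
    rw [iInf_congr h1]
    exact ciInf_const
  -- primal witness on a concrete error trace
  have hprimal : ∀ l : List S, ConcErrTrace T l →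
      (⨆ A : Finset (Set S), Lcegar T l A) = -1 := by
    intro l hl
    have h1 : ∀ A : Finset (Set S), Lcegar T l A = -1 :=
      fun A => if_pos (conc_abs T hl A)
    rw [iSup_congr h1]
    exact ciSup_const
  have hsafe : Safe T → (⨆ A : Finset (Set S), ⨅ l : List S, Lcegar T l A) = 1 := by
    intro hT
    refine le_antisymm (ciSup_le fun A => (ciInf_le (bddB A) []).trans (L_le_one T [] A)) ?_
    have := le_ciSup bddSI ({ReachSet T} : Finset (Set S))
    rwa [hdual hT] at this
  have hunsafe : ¬ Safe T → (⨆ A : Finset (Set S), ⨅ l : List S, Lcegar T l A) = -1 := by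
    intro hT
    obtain ⟨l₀, hl₀⟩ := unsafe_trace T hT
    have h1 : ∀ A : Finset (Set S), (⨅ l : List S, Lcegar T l A) = -1 := fun A =>
      le_antisymm (by simpa [if_pos (conc_abs T hl₀ A), Lcegar] using ciInf_le (bddB A) l₀)
        (le_ciInf fun l => neg_one_le_L T l A)
    rw [iSup_congr h1]
    exact ciSup_const
  refine ⟨?_, ⟨?_, ?_⟩, hprimal, hdual⟩
  · by_cases hT : Safe T
    · rw [hsafe hT]
      have h1 : ∀ l : List S, (⨆ A : Finset (Set S), Lcegar T l A) = 1 := fun l =>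
        le_antisymm (ciSup_le fun A => L_le_one T l A)
          (by simpa [if_neg (safe_no_abs T hT l), Lcegar] using
            le_ciSup (bddA l) ({ReachSet T} : Finset (Set S)))
      rw [iInf_congr h1]
      exact ciInf_const.symm
    · rw [hunsafe hT]
      obtain ⟨l₀, hl₀⟩ := unsafe_trace T hT
      refine (le_antisymm ?_ ?_).symm
      · have := ciInf_le bddIS l₀
        rwa [hprimal l₀ hl₀] at this
      · exact le_ciInf fun l => (neg_one_le_L T l ∅).trans (le_ciSup (bddA l) ∅)
  · intro h
    by_contra hT
    rw [hunsafe hT] at h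
    omega
  · exact hsafe
end

section
/- The idealized ICE Lagrangian enjoys strong duality and its optimal value is 1 iff T is safe: letting X be triples (I', →', B') of finite subsets of the initial states, transitions, and bad states of T, and Y = 𝒫(S) (arbitrary subsets of states as invariant candidates), with L'(S', p) = 1 iff p is a safe inductive invariant for the subsystem S', we have sup_p inf_{S'} L'(S',p) = inf_{S'} sup_p L'(S',p), and this common value is 1 iff T is safe. -/
open scoped Classical

/-- A finite subsystem of T: finite sets of initial states, transitions and bad states. -/
structure Subsys {S : Type} (T : TS S) where
  init : Finset S
  tr : Finset (S × S)
  bad : Finset S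
  init_sub : ↑init ⊆ T.init
  tr_sub : ∀ p ∈ tr, T.tr p.1 p.2
  bad_sub : ↑bad ⊆ T.bad

instance {S : Type} (T : TS S) : Nonempty (Subsys T) :=
  ⟨⟨∅, ∅, ∅, by simp, by simp, by simp⟩⟩

/-- p ⊆ S is a safe inductive invariant for the subsystem S'. -/
def SafeInd {S : Type} {T : TS S} (S' : Subsys T) (p : Set S) : Prop :=
  (↑S'.init ⊆ p) ∧ (∀ q ∈ S'.tr, q.1 ∈ p → q.2 ∈ p) ∧ (∀ s ∈ S'.bad, s ∉ p)

/-- The idealized ICE Lagrangian: 1 iff p is a safe inductive invariant for S'. -/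
noncomputable def Lice {S : Type} {T : TS S} (S' : Subsys T) (p : Set S) : ℤ :=
  if SafeInd S' p then 1 else -1


section Aux

variable {S : Type} {T : TS S}

lemma Lice_le_one (S' : Subsys T) (p : Set S) : Lice S' p ≤ 1 := by
  unfold Lice; split <;> norm_num

lemma neg_one_le_Lice (S' : Subsys T) (p : Set S) : (-1 : ℤ) ≤ Lice S' p := by
  unfold Lice; split <;> norm_num

lemma bddAbove_range_Lice (S' : Subsys T) : BddAbove (Set.range fun p : Set S => Lice S' p) :=
  ⟨1, by rintro y ⟨p, rfl⟩; exact Lice_le_one S' p⟩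

lemma bddBelow_range_Lice (p : Set S) : BddBelow (Set.range fun S' : Subsys T => Lice S' p) :=
  ⟨-1, by rintro y ⟨S', rfl⟩; exact neg_one_le_Lice S' p⟩

lemma trace_subsys {a b : S} (h : Relation.ReflTransGen T.tr a b) :
    ∃ E : Finset (S × S), (∀ q ∈ E, T.tr q.1 q.2) ∧
      ∀ p : Set S, a ∈ p → (∀ q ∈ E, q.1 ∈ p → q.2 ∈ p) → b ∈ p := by
  induction h with
  | refl => exact ⟨∅, by simp, fun p hp _ => hp⟩
  | @tail b c hab hbc ih =>
    obtain ⟨E, hE, hcl⟩ := ih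
    refine ⟨insert (b, c) E, ?_, ?_⟩
    · intro q hq
      rcases Finset.mem_insert.mp hq with h | h
      · subst h; exact hbc
      · exact hE q h
    · intro p hap hcl'
      exact hcl' _ (Finset.mem_insert_self _ _)
        (hcl p hap fun q hq => hcl' q (Finset.mem_insert_of_mem hq))

end Aux


/-- The idealized ICE Lagrangian enjoys strong duality and its optimal value is 1 iff T
is safe. -/


theorem ice_idealized_strong_duality {S : Type} (T : TS S) :
    ((⨆ p : Set S, ⨅ S' : Subsys T, Lice S' p) =
        (⨅ S' : Subsys T, ⨆ p : Set S, Lice S' p)) ∧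
    ((⨆ p : Set S, ⨅ S' : Subsys T, Lice S' p) = 1 ↔ Safe T) := by
  by_cases hs : Safe T
  · set R : Set S := {s | Reachable T s} with hR
    have hRinv : ∀ S' : Subsys T, SafeInd S' R := by
      intro S'
      refine ⟨?_, ?_, ?_⟩
      · intro s hsmem
        exact ⟨s, S'.init_sub hsmem, Relation.ReflTransGen.refl⟩
      · rintro q hq ⟨s₀, h₀, hrt⟩
        exact ⟨s₀, h₀, hrt.tail (S'.tr_sub q hq)⟩
      · intro s hsb hsR
        exact hs s hsR (S'.bad_sub hsb)
    have hLR : ∀ S' : Subsys T, Lice S' R = 1 := fun S' => if_pos (hRinv S')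
    have hinfR : (⨅ S' : Subsys T, Lice S' R) = 1 := by
      have h : (fun S' : Subsys T => Lice S' R) = fun _ => (1 : ℤ) := funext hLR
      rw [iInf, h, Set.range_const, csInf_singleton]
    have hsupinf : (⨆ p : Set S, ⨅ S' : Subsys T, Lice S' p) = 1 := by
      apply le_antisymm
      · apply ciSup_le
        intro p
        exact le_trans (ciInf_le (bddBelow_range_Lice p) (Classical.arbitrary _))
          (Lice_le_one _ p)
      · calc (1 : ℤ) = ⨅ S' : Subsys T, Lice S' R := hinfR.symm
          _ ≤ ⨆ p : Set S, ⨅ S' : Subsys T, Lice S' p := by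
              apply le_ciSup (f := fun p : Set S => ⨅ S' : Subsys T, Lice S' p)
              refine ⟨1, ?_⟩
              rintro y ⟨p, rfl⟩
              exact le_trans (ciInf_le (bddBelow_range_Lice p) (Classical.arbitrary _))
                (Lice_le_one _ p)
    have hinfsup : (⨅ S' : Subsys T, ⨆ p : Set S, Lice S' p) = 1 := by
      have hsup : ∀ S' : Subsys T, (⨆ p : Set S, Lice S' p) = 1 := by
        intro S'
        apply le_antisymm
        · exact ciSup_le fun p => Lice_le_one S' p
        · calc (1 : ℤ) = Lice S' R := (hLR S').symm
            _ ≤ ⨆ p : Set S, Lice S' p := le_ciSup (bddAbove_range_Lice S') R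
      have h : (fun S' : Subsys T => ⨆ p : Set S, Lice S' p) = fun _ => (1 : ℤ) :=
        funext hsup
      rw [iInf, h, Set.range_const, csInf_singleton]
    exact ⟨hsupinf.trans hinfsup.symm, by rw [hsupinf]; exact ⟨fun _ => hs, fun _ => rfl⟩⟩
  · obtain ⟨s, hreach, hbad⟩ : ∃ s, Reachable T s ∧ s ∈ T.bad := by
      by_contra hc
      push_neg at hc
      exact hs fun s h => hc s h
    obtain ⟨s₀, h₀, hrt⟩ := hreach
    obtain ⟨E, hE, hcl⟩ := trace_subsys hrt
    set S₀ : Subsys T := ⟨{s₀}, E, {s}, by simpa using h₀, hE, by simpa using hbad⟩ with hS₀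
    have hno : ∀ p : Set S, ¬ SafeInd S₀ p := by
      rintro p ⟨hi, ht, hb⟩
      exact hb s (Finset.mem_singleton_self s)
        (hcl p (hi (by simp [hS₀])) ht)
    have hL0 : ∀ p : Set S, Lice S₀ p = -1 := fun p => if_neg (hno p)
    have hinfsup : (⨅ S' : Subsys T, ⨆ p : Set S, Lice S' p) = -1 := by
      apply le_antisymm
      · have h0 : (⨆ p : Set S, Lice S₀ p) = -1 := by
          have h : (fun p : Set S => Lice S₀ p) = fun _ => (-1 : ℤ) := funext hL0
          rw [iSup, h, Set.range_const, csSup_singleton]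
        calc (⨅ S' : Subsys T, ⨆ p : Set S, Lice S' p)
            ≤ ⨆ p : Set S, Lice S₀ p := by
              apply ciInf_le
              refine ⟨-1, ?_⟩
              rintro y ⟨S', rfl⟩
              exact le_trans (neg_one_le_Lice S' ∅) (le_ciSup (bddAbove_range_Lice S') ∅)
          _ = -1 := h0
      · exact le_ciInf fun S' =>
          le_trans (neg_one_le_Lice S' ∅) (le_ciSup (bddAbove_range_Lice S') ∅)
    have hsupinf : (⨆ p : Set S, ⨅ S' : Subsys T, Lice S' p) = -1 := by
      have hinf : ∀ p : Set S, (⨅ S' : Subsys T, Lice S' p) = -1 := by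
        intro p
        apply le_antisymm
        · calc (⨅ S' : Subsys T, Lice S' p) ≤ Lice S₀ p :=
              ciInf_le (bddBelow_range_Lice p) S₀
            _ = -1 := hL0 p
        · exact le_ciInf fun S' => neg_one_le_Lice S' p
      have h : (fun p : Set S => ⨅ S' : Subsys T, Lice S' p) = fun _ => (-1 : ℤ) :=
        funext hinf
      rw [iSup, h, Set.range_const, csSup_singleton]
    refine ⟨hsupinf.trans hinfsup.symm, ?_⟩
    rw [hsupinf]
    exact ⟨fun h => absurd h (by norm_num), fun h => absurd h hs⟩
end

section
/- Let T and T† be induction-dual transition systems. If I† ∋ p₀ →† p₁ →† ⋯ →† pₙ is a path in T† from an initial state, then the union ⋃ᵢ pᵢ (interpreted as the conjunction of all predicates in all pᵢ) is an inductive invariant for T. -/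
/-- s satisfies all predicates in the finite set A. -/
def SatSet {S P : Type} (sat : S → P → Prop) (s : S) (A : Finset P) : Prop :=
  ∀ q ∈ A, sat s q

/-- Path-to-invariant lemma for induction-dual transition systems: a path
I† ∋ p₀ →† p₁ →† ⋯ →† pₙ yields that ⋃ᵢ pᵢ is an inductive invariant of T
(initiation and consecution). -/
theorem path_to_invariant {S P : Type} [DecidableEq P]
    (T : TS S) (Td : TS (Finset P)) (sat : S → P → Prop)
    (ID1 : ∀ s ∈ T.init, ∀ q : P, sat s q)
    (ID2 : ∀ s : S, ∀ A ∈ Td.init, SatSet sat s A)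
    (ID3 : ∀ s ∈ T.bad, ∀ A ∈ Td.bad, ¬ SatSet sat s A)
    (ID4 : ∀ (s s' : S) (p p' : Finset P), T.tr s s' → Td.tr p p' →
      SatSet sat s p → SatSet sat s p' → SatSet sat s' p → SatSet sat s' p')
    (n : ℕ) (p : Fin (n + 1) → Finset P)
    (hp0 : p 0 ∈ Td.init)
    (hstep : ∀ i : Fin n, Td.tr (p i.castSucc) (p i.succ)) :
    (T.init ⊆ {s | SatSet sat s (Finset.univ.biUnion p)}) ∧
    (∀ s s', SatSet sat s (Finset.univ.biUnion p) → T.tr s s' →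
      SatSet sat s' (Finset.univ.biUnion p)) := by
  constructor
  · intro s hs q hq
    exact ID1 s hs q
  · intro s s' hs htr
    have hsi : ∀ i : Fin (n+1), SatSet sat s (p i) := by
      intro i q hq
      exact hs q (Finset.mem_biUnion.2 ⟨i, Finset.mem_univ i, hq⟩)
    have hsi' : ∀ i : Fin (n+1), SatSet sat s' (p i) := by
      intro i
      induction i using Fin.induction with
      | zero => exact ID2 s' (p 0) hp0
      | succ j ih =>
        exact ID4 s s' (p j.castSucc) (p j.succ) htr (hstep j)
          (hsi j.castSucc) (hsi j.succ) ih
    intro q hq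
    obtain ⟨i, -, hq⟩ := Finset.mem_biUnion.1 hq
    exact hsi' i q hq
end

section
/- Let T and T† be induction-dual transition systems. Then at least one of the following holds: (a) some set ϑ of predicates is a safe inductive invariant for T, or (b) some set ϖ of states of T is a safe inductive invariant for T†. -/
/-- Dichotomy for induction-dual transition systems: either some set of predicates is a
safe inductive invariant for T, or some set of states is a safe inductive invariant for
the dual system T†. -/
theorem induction_duality_dichotomy {S P : Type}
    (T : TS S) (Td : TS (Finset P)) (sat : S → P → Prop)
    (ID1 : ∀ s ∈ T.init, ∀ q : P, sat s q)
    (ID2 : ∀ s : S, ∀ A ∈ Td.init, SatSet sat s A)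
    (ID3 : ∀ s ∈ T.bad, ∀ A ∈ Td.bad, ¬ SatSet sat s A)
    (ID4 : ∀ (s s' : S) (p p' : Finset P), T.tr s s' → Td.tr p p' →
      SatSet sat s p → SatSet sat s p' → SatSet sat s' p → SatSet sat s' p') :
    (∃ ϑ : Set P,
      (T.init ⊆ {s | ∀ q ∈ ϑ, sat s q}) ∧
      (∀ s s', (∀ q ∈ ϑ, sat s q) → T.tr s s' → ∀ q ∈ ϑ, sat s' q) ∧
      (∀ s ∈ T.bad, ¬ ∀ q ∈ ϑ, sat s q)) ∨
    (∃ ϖ : Set S,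
      (∀ A ∈ Td.init, ∀ s ∈ ϖ, SatSet sat s A) ∧
      (∀ A A' : Finset P, Td.tr A A' → (∀ s ∈ ϖ, SatSet sat s A) →
        ∀ s ∈ ϖ, SatSet sat s A') ∧
      (∀ A ∈ Td.bad, ∃ s ∈ ϖ, ¬ SatSet sat s A)) := by

  classical
  -- Ind ϑ: ϑ is an inductive invariant for T
  set Ind : Set P → Prop := fun ϑ =>
    (T.init ⊆ {s | ∀ q ∈ ϑ, sat s q}) ∧
    (∀ s s', (∀ q ∈ ϑ, sat s q) → T.tr s s' → ∀ q ∈ ϑ, sat s' q) with hInd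
  set ϑ : Set P := {q | ∃ ϑ', Ind ϑ' ∧ q ∈ ϑ'} with hϑ
  have hind : Ind ϑ := by
    constructor
    · intro s hs q hq
      obtain ⟨ϑ', hϑ', hq'⟩ := hq
      exact hϑ'.1 hs q hq'
    · intro s s' hsat htr q hq
      obtain ⟨ϑ', hϑ', hq'⟩ := hq
      exact hϑ'.2 s s' (fun q hq => hsat q ⟨ϑ', hϑ', hq⟩) htr q hq'
  by_cases hsafe : ∀ s ∈ T.bad, ¬ ∀ q ∈ ϑ, sat s q
  · exact Or.inl ⟨ϑ, hind.1, hind.2, hsafe⟩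
  · push_neg at hsafe
    obtain ⟨b, hb, hbsat⟩ := hsafe
    set ϖ : Set S := {s | ∀ q ∈ ϑ, sat s q} with hϖ
    refine Or.inr ⟨ϖ, ?_, ?_, ?_⟩
    · intro A hA s _
      exact ID2 s A hA
    · intro A A' htr hAsat s hs
      -- First: A ⊆ ϑ (ϑ ∪ A is inductive)
      have hAϑ : (↑A : Set P) ⊆ ϑ := by
        intro q hq
        refine ⟨ϑ ∪ ↑A, ⟨?_, ?_⟩, Or.inr hq⟩
        · intro t ht r hr
          rcases hr with hr | hr
          · exact hind.1 ht r hr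
          · exact hAsat t (hind.1 ht) r hr
        · intro t t' htsat httr r hr
          have htϖ : t ∈ ϖ := fun r hr => htsat r (Or.inl hr)
          have ht'ϖ : t' ∈ ϖ := hind.2 t t' htϖ httr
          rcases hr with hr | hr
          · exact ht'ϖ r hr
          · exact hAsat t' ht'ϖ r hr
      -- Then: A' ⊆ ϑ (ϑ ∪ A' is inductive, using ID1 and ID4)
      have hA'ϑ : (↑A' : Set P) ⊆ ϑ := by
        intro q hq
        refine ⟨ϑ ∪ ↑A', ⟨?_, ?_⟩, Or.inr hq⟩
        · intro t ht r _
          exact ID1 t ht r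
        · intro t t' htsat httr r hr
          have htϖ : t ∈ ϖ := fun r hr => htsat r (Or.inl hr)
          have ht'ϖ : t' ∈ ϖ := hind.2 t t' htϖ httr
          rcases hr with hr | hr
          · exact ht'ϖ r hr
          · exact ID4 t t' A A' httr htr
              (fun x hx => htϖ x (hAϑ hx))
              (fun x hx => htsat x (Or.inr hx))
              (fun x hx => ht'ϖ x (hAϑ hx)) r hr
      exact fun q hq => hs q (hA'ϑ hq)
    · intro A hA
      exact ⟨b, hbsat, ID3 b hb A hA⟩
end

section
/- For the maximum inductive invariant ϑ ⊆ P of a transition system T (the union of all inductive invariant predicate sets), and ϖ := {s ∈ S : ∀p ∈ ϑ, s ⊨ p}, one has: for every predicate p ∈ P, (∀s ∈ ϖ, s ⊨ p) if and only if p ∈ ϑ. -/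
/-- ϑ ⊆ P is an inductive invariant of T (interpreted conjunctively). -/
def IsInv {S P : Type} (T : TS S) (sat : S → P → Prop) (ϑ : Set P) : Prop :=
  (T.init ⊆ {s | ∀ q ∈ ϑ, sat s q}) ∧
  (∀ s s', (∀ q ∈ ϑ, sat s q) → T.tr s s' → ∀ q ∈ ϑ, sat s' q)

/-- The maximum inductive invariant: the union of all inductive invariants. -/
def MaxInv {S P : Type} (T : TS S) (sat : S → P → Prop) : Set P :=
  ⋃₀ {ϑ : Set P | IsInv T sat ϑ}

lemma maxInv_isInv {S P : Type} (T : TS S) (sat : S → P → Prop) :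
    IsInv T sat (MaxInv T sat) := by
  constructor
  · intro s hs q hq
    obtain ⟨ϑ, hϑ, hqϑ⟩ := hq
    exact hϑ.1 hs q hqϑ
  · intro s s' hs htr q hq
    obtain ⟨ϑ, hϑ, hqϑ⟩ := hq
    exact hϑ.2 s s' (fun q' hq' => hs q' ⟨ϑ, hϑ, hq'⟩) htr q hqϑ

/-- For the maximum inductive invariant ϑ and ϖ = {s : ∀ p ∈ ϑ, s ⊨ p}, a predicate is
satisfied by all of ϖ iff it belongs to ϑ. -/
theorem max_invariant_characterization {S P : Type}
    (T : TS S) (sat : S → P → Prop) :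
    ∀ p : P,
      (∀ s ∈ {s : S | ∀ q ∈ MaxInv T sat, sat s q}, sat s p) ↔ p ∈ MaxInv T sat := by
  intro p
  have hmax := maxInv_isInv T sat
  constructor
  · intro h
    refine ⟨MaxInv T sat ∪ {p}, ?_, Or.inr rfl⟩
    constructor
    · intro s hs q hq
      rcases hq with hq | hq
      · exact hmax.1 hs q hq
      · rw [hq]; exact h s (hmax.1 hs)
    · intro s s' hs htr q hq
      have hs' : ∀ q ∈ MaxInv T sat, sat s' q :=
        hmax.2 s s' (fun q' hq' => hs q' (Or.inl hq')) htr
      rcases hq with hq | hq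
      · exact hs' q hq
      · rw [hq]; exact h s' hs'
  · intro hp s hs
    exact hs p hp
end

section
/- If r : S → ℕ is not a ranking function for the transition system T, then there exists a finite subsystem S' = ({s₀}, {(s₀,s₁),…,(sₙ,sₙ₊₁)}) of T, obtained from a reachable transition sequence I ∋ s₀ → ⋯ → sₙ → sₙ₊₁ with r(sₙ) ≤ r(sₙ₊₁), such that r is not a ranking function for S'. Consequently, if for every finite subsystem S' the function r is a ranking function for S', then T terminates (r is a ranking function for T, and T has no infinite trace). -/
/-- A transition system without bad states. -/
structure TS2 (S : Type) where
  init : Set S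
  tr : S → S → Prop

/-- T terminates: it has no infinite trace from an initial state. -/
def Terminating {S : Type} (T : TS2 S) : Prop :=
  ¬ ∃ f : ℕ → S, f 0 ∈ T.init ∧ ∀ i, T.tr (f i) (f (i + 1))

/-- r is a ranking function (into ℕ) for the subsystem (I', →'). -/
def IsRank {S : Type} (I' : Set S) (tr' : S → S → Prop) (r : S → ℕ) : Prop :=
  ∀ s₀ s s', s₀ ∈ I' → Relation.ReflTransGen tr' s₀ s → tr' s s' → r s' < r s

/-- A finite chain of steps yields reflexive-transitive closure. -/
lemma chain_rtg {S : Type} (R : S → S → Prop) (g : ℕ → S) :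
    ∀ n, (∀ i < n, R (g i) (g (i + 1))) → Relation.ReflTransGen R (g 0) (g n) := by
  intro n
  induction n with
  | zero => intro _; exact Relation.ReflTransGen.refl
  | succ k ih =>
    intro h
    exact Relation.ReflTransGen.tail (ih fun i hi => h i (Nat.lt_succ_of_lt hi))
      (h k (Nat.lt_succ_self k))

/-- Reflexive-transitive closure yields a finite chain. -/
lemma rtg_chain {S : Type} {R : S → S → Prop} {a b : S} (h : Relation.ReflTransGen R a b) :
    ∃ (n : ℕ) (g : ℕ → S), g 0 = a ∧ g n = b ∧ ∀ i < n, R (g i) (g (i + 1)) := by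
  induction h with
  | refl => exact ⟨0, fun _ => a, rfl, rfl, fun i hi => absurd hi (Nat.not_lt_zero i)⟩
  | @tail b c _ hbc ih =>
    obtain ⟨n, g, hg0, hgn, hstep⟩ := ih
    refine ⟨n + 1, fun i => if i ≤ n then g i else c, by simp [hg0], by simp, ?_⟩
    intro i hi
    rcases Nat.lt_succ_iff_lt_or_eq.mp hi with hlt | heq
    · simp only [Nat.le_of_lt hlt, Nat.succ_le_of_lt hlt, if_pos]
      exact hstep i hlt
    · subst heq
      simp [hgn, hbc]

/-- If r is not a ranking function for T then there is a finite subsystem, extracted from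
a reachable transition sequence violating the ranking condition, on which r fails; and
conversely, if r is a ranking function for every finite subsystem, then T terminates. -/
theorem ranking_finite_subsystems {S : Type} (T : TS2 S) (r : S → ℕ) :
    (¬ IsRank T.init T.tr r →
      ∃ (n : ℕ) (s : ℕ → S), s 0 ∈ T.init ∧ (∀ i ≤ n, T.tr (s i) (s (i + 1))) ∧
        r (s n) ≤ r (s (n + 1)) ∧
        ¬ IsRank {s 0} (fun a b => ∃ i ≤ n, a = s i ∧ b = s (i + 1)) r) ∧
    ((∀ (I' : Finset S) (tr' : Finset (S × S)), ↑I' ⊆ T.init →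
        (∀ p ∈ tr', T.tr p.1 p.2) →
        IsRank ↑I' (fun a b => (a, b) ∈ tr') r) →
      Terminating T) := by
  classical
  constructor
  · intro hnr
    simp only [IsRank, not_forall] at hnr
    obtain ⟨s₀, s, s', h0, hrtg, htr, hlt⟩ := hnr
    obtain ⟨n, g, hg0, hgn, hstep⟩ := rtg_chain hrtg
    refine ⟨n, fun i => if i ≤ n then g i else s', ?_, ?_, ?_, ?_⟩
    · simpa [hg0] using h0
    · intro i hi
      rcases Nat.lt_or_ge i n with hlt' | hge
      · simp only [hi, Nat.succ_le_of_lt hlt', if_pos]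
        exact hstep i hlt'
      · have : i = n := le_antisymm hi hge
        subst this
        simpa [hgn] using htr
    · simpa [hgn] using Nat.le_of_not_lt hlt
    · intro hR
      have hchain : Relation.ReflTransGen
          (fun a b => ∃ i ≤ n, a = (if i ≤ n then g i else s') ∧
            b = (if i + 1 ≤ n then g (i + 1) else s'))
          ((fun i => if i ≤ n then g i else s') 0)
          ((fun i => if i ≤ n then g i else s') n) := by
        apply chain_rtg (g := fun i => if i ≤ n then g i else s')
        intro i hi
        exact ⟨i, Nat.le_of_lt hi, rfl, rfl⟩
      have := hR _ _ _ rfl hchain ⟨n, le_refl n, rfl, rfl⟩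
      simp only [le_refl, if_pos, Nat.not_succ_le_self, if_neg, hgn] at this
      exact hlt this
  · intro hfin
    rintro ⟨f, hf0, hfstep⟩
    have hdec : ∀ i, r (f (i + 1)) < r (f i) := by
      intro i
      have h := hfin {f 0} ((Finset.range (i + 1)).image fun j => (f j, f (j + 1)))
        (by simpa using hf0)
        (by
          intro p hp
          simp only [Finset.mem_image, Finset.mem_range] at hp
          obtain ⟨j, _, rfl⟩ := hp
          exact hfstep j)
      apply h (f 0) (f i) (f (i + 1)) (by simp)
      · apply chain_rtg
        intro j hj
        simp only [Finset.mem_image, Finset.mem_range]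
        exact ⟨j, Nat.lt_succ_of_lt hj, rfl⟩
      · simp only [Finset.mem_image, Finset.mem_range]
        exact ⟨i, Nat.lt_succ_self i, rfl⟩
    have key : ∀ i, r (f i) + i ≤ r (f 0) := by
      intro i
      induction i with
      | zero => simp
      | succ k ih =>
        have := hdec k
        omega
    have := key (r (f 0) + 1)
    omega
end

section
/- (Podelski–Rybalchenko, disjunctive well-foundedness) A transition system T is terminating if there exists a disjunctively well-founded relation ≻ (a finite union of well-founded relations) such that for all states, I ∋ s₀ →* s →⁺ s' implies s ≻ s'. -/
/-- Podelski–Rybalchenko: a transition system is terminating if there is a disjunctively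
well-founded relation ≻ (a finite union of well-founded relations) such that
I ∋ s₀ →* s →⁺ s' implies s ≻ s'. -/
theorem podelski_rybalchenko {S : Type} (T : TS2 S)
    (succ : S → S → Prop) (k : ℕ) (rels : Fin k → S → S → Prop)
    (hwf : ∀ i, WellFounded (fun a b => rels i b a))
    (hunion : ∀ a b, succ a b ↔ ∃ i, rels i a b)
    (hcover : ∀ s₀ s s', s₀ ∈ T.init → Relation.ReflTransGen T.tr s₀ s →
      Relation.TransGen T.tr s s' → succ s s') :
    Terminating T := by
  rintro ⟨f, hf0, hstep⟩
  -- reachability facts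
  have hrt : ∀ i, Relation.ReflTransGen T.tr (f 0) (f i) := by
    intro i
    induction i with
    | zero => exact Relation.ReflTransGen.refl
    | succ n ih => exact ih.tail (hstep n)
  have htg : ∀ i j, i < j → Relation.TransGen T.tr (f i) (f j) := by
    intro i j
    induction j with
    | zero => exact fun h => absurd h (Nat.not_lt_zero i)
    | succ n ih =>
      intro hij
      rcases Nat.lt_succ_iff_lt_or_eq.mp hij with h | h
      · exact (ih h).tail (hstep n)
      · rw [h]; exact Relation.TransGen.single (hstep n)
  have hsucc : ∀ i j, i < j → ∃ c, rels c (f i) (f j) := fun i j hij =>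
    (hunion _ _).mp (hcover _ _ _ hf0 (hrt i) (htg i j hij))
  classical
  -- the set of pairs colored c above i
  set Tc : Fin k → ℕ → Set ℕ := fun c i => {j | i < j ∧ rels c (f i) (f j)} with hTc
  have hcol : ∀ i, ∃ c, Tc c i ∈ Filter.hyperfilter ℕ := by
    intro i
    have h1 : {j | i < j} ∈ Filter.hyperfilter ℕ := by
      have he : {j | i < j} = (Set.Iic i)ᶜ := by ext j; simp [Nat.not_lt]
      rw [he]
      exact Filter.compl_mem_hyperfilter_of_finite (Set.finite_Iic i)
    have h2 : {j | i < j} ⊆ ⋃ c ∈ (Set.univ : Set (Fin k)), Tc c i := by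
      intro j hj
      obtain ⟨c, hc⟩ := hsucc i j hj
      exact Set.mem_biUnion (Set.mem_univ c) ⟨hj, hc⟩
    have h3 : (⋃ c ∈ (Set.univ : Set (Fin k)), Tc c i) ∈ Filter.hyperfilter ℕ := Filter.mem_of_superset h1 h2
    obtain ⟨c, -, hc⟩ := (Ultrafilter.finite_biUnion_mem_iff Set.finite_univ).mp h3
    exact ⟨c, hc⟩
  choose col hcolmem using hcol
  -- a color that occurs U-often
  have hfib : ∃ c₀, {i | col i = c₀} ∈ Filter.hyperfilter ℕ := by
    have h3 : (⋃ c ∈ (Set.univ : Set (Fin k)), {i | col i = c}) ∈ Filter.hyperfilter ℕ := by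
      refine Filter.mem_of_superset Filter.univ_mem ?_
      intro i _
      exact Set.mem_biUnion (Set.mem_univ (col i)) rfl
    obtain ⟨c, -, hc⟩ := (Ultrafilter.finite_biUnion_mem_iff Set.finite_univ).mp h3
    exact ⟨c, hc⟩
  obtain ⟨c₀, hA⟩ := hfib
  set A : Set ℕ := {i | col i = c₀} with hAdef
  -- build the monochromatic chain
  have hnext : ∀ n : ℕ, n ∈ A → ∃ m ∈ A, m ∈ Tc c₀ n := by
    intro n hn
    have : A ∩ Tc (col n) n ∈ Filter.hyperfilter ℕ := Filter.inter_mem hA (hcolmem n)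
    obtain ⟨m, hm1, hm2⟩ := Ultrafilter.nonempty_of_mem this
    exact ⟨m, hm1, by rwa [hn] at hm2⟩
  have h0 : ∃ n, n ∈ A := Ultrafilter.nonempty_of_mem hA
  choose g0 hg0 using h0
  choose nxt hnxtA hnxtT using hnext
  let g : ℕ → ℕ := fun n => Nat.rec g0 (fun _ p => if h : p ∈ A then nxt p h else p) n
  have hgA : ∀ n, g n ∈ A := by
    intro n
    induction n with
    | zero => exact hg0
    | succ m ih => simpa [g, dif_pos ih] using hnxtA (g m) ih
  have hchain : ∀ n, rels c₀ (f (g n)) (f (g (n + 1))) := by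
    intro n
    have : g (n+1) = nxt (g n) (hgA n) := by simp [g, dif_pos (hgA n)]
    rw [this]
    exact (hnxtT (g n) (hgA n)).2
  -- contradiction with well-foundedness of rels c₀
  obtain ⟨a, ⟨m, rfl⟩, hmin⟩ := (hwf c₀).has_min (Set.range fun n => f (g n)) ⟨_, ⟨0, rfl⟩⟩
  exact hmin _ ⟨m + 1, rfl⟩ (hchain m)
end

section
/- Consequence of monotone DWF: if sup over finite sets R of candidate ranking functions of inf over reachable traces τ = s₀…sₙ of L_T-CEGAR(τ, R) equals 1 — i.e., there exists a finite set R of ranking functions into ℕ such that every reachable trace I ∋ s₀ → ⋯ → sₙ satisfies sᵢ ≻_R sⱼ for all i < j — then the transition system T is terminating. -/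
/-- Soundness of the termination CEGAR Lagrangian: if there exists a finite set R of
ranking functions into ℕ such that every reachable trace I ∋ s₀ → ⋯ → sₙ satisfies
sᵢ ≻_R sⱼ for all i < j, then T is terminating. -/
theorem tcegar_sound {S : Type} (T : TS2 S) (R : Finset (S → ℕ))
    (h : ∀ (n : ℕ) (s : ℕ → S), s 0 ∈ T.init → (∀ i < n, T.tr (s i) (s (i + 1))) →
      ∀ i j, i < j → j ≤ n → ∃ r ∈ R, r (s j) < r (s i)) :
    Terminating T := by
  rintro ⟨f, hf0, hft⟩
  -- the vectors of ranking values along the trace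
  set v : ℕ → (↥R → ℕ) := fun n r => (r : S → ℕ) (f n) with hv
  -- Dickson's lemma: ℕ^R is a partial well order
  have hpwo : (Set.univ : Set (↥R → ℕ)).IsPWO := Set.isPWO_of_wellQuasiOrderedLE Set.univ
  obtain ⟨m, n, hmn, hle⟩ := hpwo.exists_lt (f := v) (fun _ => Set.mem_univ _)
  -- but the hypothesis (with trace length n) gives a strictly decreasing coordinate
  obtain ⟨r, hrR, hr⟩ := h n f hf0 (fun i _ => hft i) m n hmn le_rfl
  exact absurd (hle ⟨r, hrR⟩) (not_le.2 hr)
end
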